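/- Every finite tree with odd diameter d ≥ 3 and exactly l ≥ 2 leaves has at most (d − 1)·l/2 + 1 edges. -/

import Mathlib

open SimpleGraph

/-- The number of edges of a simple graph. -/
noncomputable def edgeCount {V : Type*} (G : SimpleGraph V) : ℕ := G.edgeSet.ncard

/-- The degree of a vertex. -/
noncomputable def deg {V : Type*} (G : SimpleGraph V) (v : V) : ℕ := (G.neighborSet v).ncard

/-- The number of leaves (vertices of degree 1). -/
noncomputable def leafCount {V : Type*} (G : SimpleGraph V) : ℕ := {v | deg G v = 1}.ncard

/-- The diameter: the maximum distance between two vertices. -/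
noncomputable def treeDiam {V : Type*} (G : SimpleGraph V) : ℕ :=
  sSup {n | ∃ u v : V, G.dist u v = n}

/-- κ(T) = (number of leaves) + (diameter) - 2. -/
noncomputable def kappa {V : Type*} (G : SimpleGraph V) : ℕ :=
  leafCount G + treeDiam G - 2

/-- A graph is a path graph if it is acyclic, preconnected, and has maximum degree ≤ 2
(the empty graph counts as a path). -/
def IsPathGraph {W : Type*} (H : SimpleGraph W) : Prop :=
  H.IsAcyclic ∧ H.Preconnected ∧
    ∀ v a b c : W, H.Adj v a → H.Adj v b → H.Adj v c → a = b ∨ a = c ∨ b = c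

/-- A caterpillar is a tree whose non-leaf vertices induce a path. -/
def IsCaterpillar {V : Type*} (G : SimpleGraph V) : Prop :=
  G.IsTree ∧ IsPathGraph (G.induce {v | 2 ≤ deg G v})

/-- The quotient graph of `G` along a map `c` on vertices: two images are adjacent iff
they are distinct and some edge of `G` joins their fibers. -/
def quotientGraph {V W : Type*} (G : SimpleGraph V) (c : V → W) : SimpleGraph W where
  Adj a b := a ≠ b ∧ ∃ u v : V, c u = a ∧ c v = b ∧ G.Adj u v
  symm := by
    constructor
    rintro a b ⟨hne, u, v, hu, hv, h⟩
    exact ⟨hne.symm, v, u, hv, hu, h.symm⟩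
  loopless := by
    constructor
    rintro a ⟨hne, -⟩
    exact hne rfl

/-- A spider is a tree with at most one vertex of degree greater than 2. -/
def IsSpider {V : Type*} (G : SimpleGraph V) : Prop :=
  G.IsTree ∧ ∀ u v : V, 3 ≤ deg G u → 3 ≤ deg G v → u = v

/-- `k` is the maximum number of edges of a vertex-induced subgraph of `G`
that is a caterpillar. -/
def MaxInducedCaterpillar {V : Type*} (G : SimpleGraph V) (k : ℕ) : Prop :=
  IsGreatest {j : ℕ | ∃ s : Set V, IsCaterpillar (G.induce s) ∧ edgeCount (G.induce s) = j} k

namespace TreeBoundAux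


variable {V : Type*} {G : SimpleGraph V}

lemma path_length_eq_dist (hG : G.IsTree) {u v : V} {p : G.Walk u v} (hp : p.IsPath) :
    p.length = G.dist u v := by
  obtain ⟨q, hq, hql⟩ := hG.isConnected.exists_path_of_dist u v
  have h : (⟨p, hp⟩ : G.Path u v) = ⟨q, hq⟩ := hG.IsAcyclic.path_unique _ _
  have hpq : p = q := congrArg Subtype.val h
  rw [hpq, hql]

lemma dist_getVert_le (hc : G.Connected) : ∀ {u v : V} (p : G.Walk u v) (i : ℕ),
    G.dist u (p.getVert i) ≤ i
  | u, _, .nil, i => by simp [Walk.getVert, SimpleGraph.dist_self]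
  | u, _, .cons h q, 0 => by simp
  | u, _, .cons (v := b) h q, (i+1) => by
      have ih := dist_getVert_le hc q i
      have htri := hc.dist_triangle (u := u) (v := b) (w := q.getVert i)
      have hadj : G.dist u b = 1 := dist_eq_one_iff_adj.mpr h
      have hh : (Walk.cons h q).getVert (i+1) = q.getVert i := rfl
      rw [hh]; omega

lemma dist_getVert_right_le : ∀ {u v : V} (p : G.Walk u v) (i : ℕ),
    G.dist (p.getVert i) v ≤ p.length - i
  | u, _, .nil, i => by simp [Walk.getVert, SimpleGraph.dist_self]
  | u, _, .cons h q, 0 => by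
      simpa using SimpleGraph.dist_le (Walk.cons h q)
  | u, _, .cons (v := b) h q, (i+1) => by
      have ih := dist_getVert_right_le q i
      have hh : (Walk.cons h q).getVert (i+1) = q.getVert i := rfl
      have hl : (Walk.cons h q).length = q.length + 1 := by simp
      rw [hh, hl]; omega

lemma dist_getVert_eq (hc : G.Connected) {u v : V} (p : G.Walk u v)
    (hp : p.length = G.dist u v) {i : ℕ} (hi : i ≤ p.length) :
    G.dist u (p.getVert i) = i ∧ G.dist (p.getVert i) v = p.length - i := by
  have h1 := dist_getVert_le hc p i
  have h2 := dist_getVert_right_le p i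
  have h3 := hc.dist_triangle (u := u) (v := p.getVert i) (w := v)
  omega

lemma dist_getVert_getVert_le (hc : G.Connected) : ∀ {u v : V} (p : G.Walk u v) (i j : ℕ),
    i ≤ j → G.dist (p.getVert i) (p.getVert j) ≤ j - i
  | u, _, .nil, i, j, _ => by simp [Walk.getVert, SimpleGraph.dist_self]
  | u, _, .cons h q, 0, j, _ => by
      simpa using dist_getVert_le hc (Walk.cons h q) j
  | u, _, .cons h q, (i+1), (j+1), hij => by
      have ih := dist_getVert_getVert_le hc q i j (by omega)
      have h1 : (Walk.cons h q).getVert (i+1) = q.getVert i := rfl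
      have h2 : (Walk.cons h q).getVert (j+1) = q.getVert j := rfl
      rw [h1, h2]; omega

lemma dist_getVert_getVert (hc : G.Connected) {u v : V} (p : G.Walk u v)
    (hp : p.length = G.dist u v) {i j : ℕ} (hij : i ≤ j) (hj : j ≤ p.length) :
    G.dist (p.getVert i) (p.getVert j) = j - i := by
  have h1 := (dist_getVert_eq hc p hp (le_trans hij hj)).1
  have h2 := (dist_getVert_eq hc p hp hj).2
  have hupper := dist_getVert_getVert_le hc p i j hij
  have t1 := hc.dist_triangle (u := u) (v := p.getVert i) (w := p.getVert j)
  have t2 := hc.dist_triangle (u := u) (v := p.getVert j) (w := v)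
  omega

lemma getVert_of_between (hG : G.IsTree) {u v m : V}
    (h : G.dist u m + G.dist m v = G.dist u v)
    {p : G.Walk u v} (hp : p.IsPath) : p.getVert (G.dist u m) = m := by
  obtain ⟨q1, hq1, hl1⟩ := hG.isConnected.exists_path_of_dist u m
  obtain ⟨q2, hq2, hl2⟩ := hG.isConnected.exists_path_of_dist m v
  have hq : (q1.append q2).length = G.dist u v := by
    rw [Walk.length_append]; omega
  have hqp : (q1.append q2).IsPath := Walk.isPath_of_length_eq_dist _ hq
  have hpq : p = q1.append q2 :=
    congrArg Subtype.val (hG.IsAcyclic.path_unique ⟨p, hp⟩ ⟨_, hqp⟩)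
  rw [hpq, Walk.getVert_append]
  simp [hl1]

lemma dist_ne_of_adj (hG : G.IsTree) {a b x : V} (hab : G.Adj a b) :
    G.dist x a ≠ G.dist x b := by
  intro h
  obtain ⟨p, hp, hl⟩ := hG.isConnected.exists_path_of_dist x a
  by_cases hb : b ∈ p.support
  · obtain ⟨i, hgi, hile⟩ := Walk.mem_support_iff_exists_getVert.mp hb
    have h1 := (dist_getVert_eq hG.isConnected p hl hile).1
    rw [hgi] at h1
    have hia : i ≠ p.length := by
      intro hh
      exact hab.ne' (by rw [← hgi, hh, Walk.getVert_length])
    omega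
  · have hq : (p.concat hab).IsPath := by
      rw [← Walk.isPath_reverse_iff, Walk.reverse_concat]
      rw [Walk.cons_isPath_iff]
      exact ⟨hp.reverse, by simpa [Walk.support_reverse] using hb⟩
    have := path_length_eq_dist hG hq
    rw [Walk.length_concat] at this
    omega

lemma adj_dist_cases (hG : G.IsTree) {a b : V} (hab : G.Adj a b) (x : V) :
    G.dist x b = G.dist x a + 1 ∨ G.dist x a = G.dist x b + 1 := by
  have h1 := hG.isConnected.dist_triangle (u := x) (v := a) (w := b)
  have h2 := hG.isConnected.dist_triangle (u := x) (v := b) (w := a)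
  have hab1 : G.dist a b = 1 := dist_eq_one_iff_adj.mpr hab
  have hba1 : G.dist b a = 1 := dist_eq_one_iff_adj.mpr hab.symm
  have hne := dist_ne_of_adj hG hab (x := x)
  omega



lemma dist_pos_of_ne (hG : G.IsTree) {x y : V} (hxy : x ≠ y) : 1 ≤ G.dist x y := by
  have := (SimpleGraph.dist_ne_zero_iff_ne_and_reachable (G := G) (u := x) (v := y)).mpr
    ⟨hxy, hG.isConnected.preconnected x y⟩
  omega

lemma eq_of_dist_eq_zero (hG : G.IsTree) {x y : V} (h : G.dist x y = 0) : x = y := by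
  by_contra hxy
  have := dist_pos_of_ne hG hxy
  omega

/-- If an edge crosses from the `c1`-side to the `c2`-side, it is the central edge. -/
lemma adj_cross (hG : G.IsTree) {c1 c2 z z' : V} (h12 : G.Adj c1 c2) (hzz : G.Adj z z')
    (hz : G.dist z c2 = G.dist z c1 + 1) (hz' : G.dist z' c1 = G.dist z' c2 + 1) :
    z = c1 ∧ z' = c2 := by
  have hc := hG.isConnected
  have hd12 : G.dist c1 c2 = 1 := dist_eq_one_iff_adj.mpr h12
  have hdzz : G.dist z z' = 1 := dist_eq_one_iff_adj.mpr hzz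
  have t1 : G.dist z' c1 ≤ G.dist z' z + G.dist z c1 := hc.dist_triangle
  have t2 : G.dist z c2 ≤ G.dist z z' + G.dist z' c2 := hc.dist_triangle
  have hcm : G.dist z' z = G.dist z z' := SimpleGraph.dist_comm
  have hab : G.dist z c1 = G.dist z' c2 := by omega
  set a := G.dist z c1 with ha
  rcases Nat.eq_zero_or_pos a with ha0 | ha1
  · have hz1 : z = c1 := eq_of_dist_eq_zero hG ha0
    have hz2 : z' = c2 := eq_of_dist_eq_zero hG (by omega)
    exact ⟨hz1, hz2⟩
  · exfalso
    obtain ⟨p, hp, hl⟩ := hc.exists_path_of_dist z c2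
    have e1 : p.getVert 1 = z' := by
      have hb : G.dist z z' + G.dist z' c2 = G.dist z c2 := by omega
      have := getVert_of_between hG hb hp
      rwa [hdzz] at this
    have e2 : p.getVert a = c1 := by
      have hb : G.dist z c1 + G.dist c1 c2 = G.dist z c2 := by omega
      have := getVert_of_between hG hb hp
      rwa [← ha] at this
    have hd : G.dist (p.getVert 1) (p.getVert a) = a - 1 :=
      dist_getVert_getVert hc p hl (by omega) (by omega)
    rw [e1, e2] at hd
    omega

/-- Distance between vertices on opposite sides goes through the central edge. -/
lemma dist_cross (hG : G.IsTree) {c1 c2 x y : V} (h12 : G.Adj c1 c2)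
    (hx : G.dist x c2 = G.dist x c1 + 1) (hy : G.dist y c1 = G.dist y c2 + 1) :
    G.dist x y = G.dist x c1 + 1 + G.dist c2 y := by
  classical
  have hc := hG.isConnected
  obtain ⟨p, hp, hl⟩ := hc.exists_path_of_dist x y
  set L := p.length with hL
  have hPL : ¬ (G.dist (p.getVert L) c2 = G.dist (p.getVert L) c1 + 1) := by
    rw [Walk.getVert_length]
    omega
  have hex : ∃ i, ¬ (G.dist (p.getVert i) c2 = G.dist (p.getVert i) c1 + 1) := ⟨L, hPL⟩
  set i0 := Nat.find hex with hi0
  have hspec := Nat.find_spec hex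
  rw [← hi0] at hspec
  have hi0L : i0 ≤ L := Nat.find_min' hex hPL
  have hi0ne : i0 ≠ 0 := by
    intro h0
    rw [h0] at hspec
    rw [Walk.getVert_zero] at hspec
    exact hspec hx
  obtain ⟨j, hj⟩ : ∃ j, i0 = j + 1 := ⟨i0 - 1, by omega⟩
  have hjmin : G.dist (p.getVert j) c2 = G.dist (p.getVert j) c1 + 1 := by
    by_contra hcon
    have := Nat.find_min' hex hcon
    omega
  have hjL : j < p.length := by omega
  have hadj := p.adj_getVert_succ hjL
  have hside : G.dist (p.getVert (j+1)) c1 = G.dist (p.getVert (j+1)) c2 + 1 := by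
    rcases adj_dist_cases hG h12 (p.getVert (j+1)) with hcase | hcase
    · exfalso
      rw [hj] at hspec
      exact hspec hcase
    · exact hcase
  obtain ⟨ez, ez'⟩ := adj_cross hG h12 hadj hjmin hside
  have d1 := (dist_getVert_eq hc p hl (by omega : j ≤ p.length)).1
  have d2 := (dist_getVert_eq hc p hl (by omega : j + 1 ≤ p.length)).2
  rw [ez] at d1
  rw [ez'] at d2
  have hcm1 : G.dist c2 y = G.dist y c2 := SimpleGraph.dist_comm
  have hcm2 : G.dist x c1 = G.dist c1 x := SimpleGraph.dist_comm
  omega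

lemma between_unique (hG : G.IsTree) {c1 l x x' : V}
    (h1 : G.dist c1 l = G.dist c1 x + G.dist x l)
    (h2 : G.dist c1 l = G.dist c1 x' + G.dist x' l)
    (h3 : G.dist c1 x = G.dist c1 x') : x = x' := by
  obtain ⟨p, hp, hl⟩ := hG.isConnected.exists_path_of_dist c1 l
  have e1 := getVert_of_between hG (show G.dist c1 x + G.dist x l = G.dist c1 l by omega) hp
  have e2 := getVert_of_between hG (show G.dist c1 x' + G.dist x' l = G.dist c1 l by omega) hp
  rw [h3] at e1
  rw [e1] at e2
  exact e2

/-- Beyond any vertex on the `c1`-side there is a leaf on the `c1`-side. -/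
lemma exists_leaf [Fintype V] (hG : G.IsTree) {c1 c2 x : V} (h12 : G.Adj c1 c2)
    (hx : G.dist x c2 = G.dist x c1 + 1) (hxc : x ≠ c1) :
    ∃ lf : V, deg G lf = 1 ∧ (G.dist lf c2 = G.dist lf c1 + 1) ∧
      G.dist c1 lf = G.dist c1 x + G.dist x lf := by
  classical
  have hc := hG.isConnected
  set S : Finset V := Finset.univ.filter (fun y => (G.dist y c2 = G.dist y c1 + 1) ∧
      G.dist c1 y = G.dist c1 x + G.dist x y) with hS
  have hxS : x ∈ S := by
    simp only [hS, Finset.mem_filter, Finset.mem_univ, true_and]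
    exact ⟨hx, by simp [SimpleGraph.dist_self]⟩
  obtain ⟨lf, hlfS, hmax⟩ := S.exists_max_image (fun y => G.dist x y) ⟨x, hxS⟩
  simp only [hS, Finset.mem_filter, Finset.mem_univ, true_and] at hlfS
  obtain ⟨hlf1, hlf2⟩ := hlfS
  refine ⟨lf, ?_, hlf1, hlf2⟩
  -- `lf` is a leaf
  have hxc1 : 1 ≤ G.dist c1 x := dist_pos_of_ne hG (Ne.symm hxc)
  set t := G.dist c1 lf with ht
  have ht1 : 1 ≤ t := by omega
  have hlfc1 : lf ≠ c1 := by
    intro h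
    rw [h] at ht
    simp [SimpleGraph.dist_self] at ht
    omega
  obtain ⟨p, hp, hl⟩ := hc.exists_path_of_dist c1 lf
  have hplen : p.length = t := by rw [hl]
  have hprev_adj : G.Adj (p.getVert (t-1)) lf := by
    have := p.adj_getVert_succ (i := t - 1) (by omega)
    rwa [show t - 1 + 1 = p.length by omega, Walk.getVert_length] at this
  set prev := p.getVert (t-1) with hprev
  have hprev_dist : G.dist c1 prev = t - 1 := by
    have := (dist_getVert_eq hc p hl (by omega : t - 1 ≤ p.length)).1
    rw [← hprev] at this
    omega
  have hmem : prev ∈ G.neighborSet lf := hprev_adj.symm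
  have hfin : (G.neighborSet lf).Finite := Set.toFinite _
  have hpos : 1 ≤ deg G lf := by
    have : (G.neighborSet lf).Nonempty := ⟨prev, hmem⟩
    have := (Set.ncard_pos hfin).mpr this
    unfold deg
    omega
  by_contra hdeg
  have h2le : 2 ≤ (G.neighborSet lf).ncard := by
    unfold deg at hdeg hpos
    omega
  obtain ⟨m, hmmem, hmne⟩ := Set.exists_ne_of_one_lt_ncard (s := G.neighborSet lf) (by omega) prev
  have hadj_lm : G.Adj lf m := hmmem
  rcases adj_dist_cases hG hadj_lm c1 with hcase | hcase
  · -- dist c1 m = t + 1 : contradiction with maximality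
    -- m is on the c1-side
    have hmS1 : G.dist m c2 = G.dist m c1 + 1 := by
      rcases adj_dist_cases hG h12 m with h' | h'
      · exact h'
      · exfalso
        have := dist_cross hG h12 hlf1 h'
        have hdlm : G.dist lf m = 1 := dist_eq_one_iff_adj.mpr hadj_lm
        have : G.dist lf c1 = G.dist c1 lf := SimpleGraph.dist_comm
        omega
    -- betweenness squeeze
    have tr1 : G.dist c1 m ≤ G.dist c1 x + G.dist x m := hc.dist_triangle
    have tr2 : G.dist x m ≤ G.dist x lf + G.dist lf m := hc.dist_triangle
    have hdlm : G.dist lf m = 1 := dist_eq_one_iff_adj.mpr hadj_lm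
    have hmS : m ∈ S := by
      simp only [hS, Finset.mem_filter, Finset.mem_univ, true_and]
      exact ⟨hmS1, by omega⟩
    have := hmax m hmS
    omega
  · -- dist c1 m = t - 1 : then m = prev, contradiction
    have hbet : G.dist c1 m + G.dist m lf = G.dist c1 lf := by
      have : G.dist m lf = 1 := dist_eq_one_iff_adj.mpr hadj_lm.symm
      omega
    have := getVert_of_between hG hbet hp
    have hcm : G.dist c1 m = t - 1 := by omega
    rw [hcm] at this
    exact hmne (hprev.trans this).symm

end TreeBoundAux


open TreeBoundAux in
/-- Every finite tree with odd diameter `d ≥ 3` and exactly `l ≥ 2` leaves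
has at most `(d − 1)·l/2 + 1` edges. -/
theorem tree_edge_bound_odd_diam
    {V : Type*} [Fintype V] (G : SimpleGraph V) (hG : G.IsTree)
    (d l : ℕ) (hdodd : Odd d) (hd : 3 ≤ d) (hl : 2 ≤ l)
    (hdiam : treeDiam G = d) (hleaf : leafCount G = l) :
    edgeCount G ≤ (d - 1) * l / 2 + 1 := by
  classical
  obtain ⟨r, hrd⟩ := hdodd
  have hr1 : 1 ≤ r := by omega
  have hc := hG.isConnected
  have hne : Nonempty V := hc.nonempty
  -- extract diameter facts
  unfold treeDiam at hdiam
  have hDfin : {n | ∃ u v : V, G.dist u v = n}.Finite := by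
    have heq : {n | ∃ u v : V, G.dist u v = n}
        = Set.range (fun p : V × V => G.dist p.1 p.2) := by
      ext n
      constructor
      · rintro ⟨u, v, h⟩; exact ⟨(u, v), h⟩
      · rintro ⟨⟨u, v⟩, h⟩; exact ⟨u, v, h⟩
    rw [heq]
    exact Set.finite_range _
  have hDne : {n | ∃ u v : V, G.dist u v = n}.Nonempty :=
    ⟨G.dist (Classical.arbitrary V) (Classical.arbitrary V),
      Classical.arbitrary V, Classical.arbitrary V, rfl⟩
  have hmem := Set.Nonempty.csSup_mem hDne hDfin
  rw [hdiam] at hmem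
  obtain ⟨u0, v0, hd0⟩ := hmem
  have hub : ∀ u v : V, G.dist u v ≤ d := by
    intro u v
    rw [← hdiam]
    exact le_csSup hDfin.bddAbove ⟨u, v, rfl⟩
  -- the central edge
  obtain ⟨w, hwp, hwl⟩ := hc.exists_path_of_dist u0 v0
  rw [hd0] at hwl
  have hwl2 : w.length = G.dist u0 v0 := by rw [hwl, hd0]
  set c1 := w.getVert r with hc1
  set c2 := w.getVert (r+1) with hc2
  have h12 : G.Adj c1 c2 := w.adj_getVert_succ (by omega)
  have hu01 : G.dist u0 c1 = r ∧ G.dist c1 v0 = w.length - r :=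
    dist_getVert_eq hc w hwl2 (by omega)
  have hu02 : G.dist u0 c2 = r + 1 ∧ G.dist c2 v0 = w.length - (r+1) :=
    dist_getVert_eq hc w hwl2 (by omega)
  have h1v : G.dist c1 v0 = r + 1 := by omega
  have h2v : G.dist c2 v0 = r := by omega
  have hu0S : G.dist u0 c2 = G.dist u0 c1 + 1 := by omega
  have hv0S : G.dist v0 c1 = G.dist v0 c2 + 1 := by
    have e1 : G.dist v0 c1 = G.dist c1 v0 := SimpleGraph.dist_comm
    have e2 : G.dist v0 c2 = G.dist c2 v0 := SimpleGraph.dist_comm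
    omega
  -- every vertex is within distance r of its side's center
  have hBound1 : ∀ x : V, G.dist x c2 = G.dist x c1 + 1 → G.dist c1 x ≤ r := by
    intro x hx
    have hcross := dist_cross hG h12 hx hv0S
    have e1 : G.dist c2 v0 = r := h2v
    have e2 : G.dist c1 x = G.dist x c1 := SimpleGraph.dist_comm
    have := hub x v0
    omega
  have hBound2 : ∀ x : V, G.dist x c1 = G.dist x c2 + 1 → G.dist c2 x ≤ r := by
    intro x hx
    have hcross := dist_cross hG h12.symm hx hu0S
    have e1 : G.dist c1 u0 = G.dist u0 c1 := SimpleGraph.dist_comm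
    have e2 : G.dist c2 x = G.dist x c2 := SimpleGraph.dist_comm
    have := hub x u0
    omega
  -- counting sets
  set S1 : Finset V := Finset.univ.filter
    (fun x => G.dist x c2 = G.dist x c1 + 1 ∧ x ≠ c1) with hS1
  set S2 : Finset V := Finset.univ.filter
    (fun x => G.dist x c1 = G.dist x c2 + 1 ∧ x ≠ c2) with hS2
  set L1 : Finset V := Finset.univ.filter
    (fun v => deg G v = 1 ∧ G.dist v c2 = G.dist v c1 + 1) with hL1
  set L2 : Finset V := Finset.univ.filter
    (fun v => deg G v = 1 ∧ G.dist v c1 = G.dist v c2 + 1) with hL2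
  -- the injection on side 1
  have hcard1 : S1.card ≤ L1.card * r := by
    have := Finset.card_le_card_of_injOn
      (f := fun x : V => (if h : G.dist x c2 = G.dist x c1 + 1 ∧ x ≠ c1 then
          (exists_leaf hG h12 h.1 h.2).choose else x, G.dist c1 x - 1))
      (s := S1) (t := L1 ×ˢ Finset.range r) ?_ ?_
    · simpa [Finset.card_product] using this
    · intro x hx
      simp only [Finset.mem_coe, hS1, Finset.mem_filter, Finset.mem_univ, true_and] at hx
      simp only [dif_pos hx]
      obtain ⟨hlf1, hlf2, hlf3⟩ := (exists_leaf hG h12 hx.1 hx.2).choose_spec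
      have hx1 : 1 ≤ G.dist c1 x := dist_pos_of_ne hG (Ne.symm hx.2)
      have hxr : G.dist c1 x ≤ r := hBound1 x hx.1
      simp only [Finset.mem_coe, Finset.mem_product, hL1, Finset.mem_filter, Finset.mem_univ, true_and,
        Finset.mem_range]
      exact ⟨⟨hlf1, hlf2⟩, by omega⟩
    · intro x hx y hy hxy
      simp only [hS1, Finset.coe_filter, Set.mem_setOf_eq, Finset.mem_univ, true_and] at hx hy
      simp only [dif_pos hx, dif_pos hy] at hxy
      obtain ⟨-, -, hbx⟩ := (exists_leaf hG h12 hx.1 hx.2).choose_spec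
      obtain ⟨-, -, hby⟩ := (exists_leaf hG h12 hy.1 hy.2).choose_spec
      have hfst := congrArg Prod.fst hxy
      have hsnd := congrArg Prod.snd hxy
      simp only at hfst hsnd
      rw [hfst] at hbx
      have hx1 : 1 ≤ G.dist c1 x := dist_pos_of_ne hG (Ne.symm hx.2)
      have hy1 : 1 ≤ G.dist c1 y := dist_pos_of_ne hG (Ne.symm hy.2)
      have hdeq : G.dist c1 x = G.dist c1 y := by omega
      exact between_unique hG hbx hby hdeq
  have hcard2 : S2.card ≤ L2.card * r := by
    have := Finset.card_le_card_of_injOn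
      (f := fun x : V => (if h : G.dist x c1 = G.dist x c2 + 1 ∧ x ≠ c2 then
          (exists_leaf hG h12.symm h.1 h.2).choose else x, G.dist c2 x - 1))
      (s := S2) (t := L2 ×ˢ Finset.range r) ?_ ?_
    · simpa [Finset.card_product] using this
    · intro x hx
      simp only [Finset.mem_coe, hS2, Finset.mem_filter, Finset.mem_univ, true_and] at hx
      simp only [dif_pos hx]
      obtain ⟨hlf1, hlf2, hlf3⟩ := (exists_leaf hG h12.symm hx.1 hx.2).choose_spec
      have hx1 : 1 ≤ G.dist c2 x := dist_pos_of_ne hG (Ne.symm hx.2)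
      have hxr : G.dist c2 x ≤ r := hBound2 x hx.1
      simp only [Finset.mem_coe, Finset.mem_product, hL2, Finset.mem_filter, Finset.mem_univ, true_and,
        Finset.mem_range]
      exact ⟨⟨hlf1, hlf2⟩, by omega⟩
    · intro x hx y hy hxy
      simp only [hS2, Finset.coe_filter, Set.mem_setOf_eq, Finset.mem_univ, true_and] at hx hy
      simp only [dif_pos hx, dif_pos hy] at hxy
      obtain ⟨-, -, hbx⟩ := (exists_leaf hG h12.symm hx.1 hx.2).choose_spec
      obtain ⟨-, -, hby⟩ := (exists_leaf hG h12.symm hy.1 hy.2).choose_spec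
      have hfst := congrArg Prod.fst hxy
      have hsnd := congrArg Prod.snd hxy
      simp only at hfst hsnd
      rw [hfst] at hbx
      have hx1 : 1 ≤ G.dist c2 x := dist_pos_of_ne hG (Ne.symm hx.2)
      have hy1 : 1 ≤ G.dist c2 y := dist_pos_of_ne hG (Ne.symm hy.2)
      have hdeq : G.dist c2 x = G.dist c2 y := by omega
      exact between_unique hG hbx hby hdeq
  -- vertices split into the two sides plus the two centers
  have hsplit : Fintype.card V ≤ S1.card + S2.card + 2 := by
    have hsub : (Finset.univ : Finset V) ⊆ S1 ∪ S2 ∪ {c1, c2} := by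
      intro x _
      simp only [Finset.mem_union, hS1, hS2, Finset.mem_filter, Finset.mem_univ, true_and,
        Finset.mem_insert, Finset.mem_singleton]
      rcases adj_dist_cases hG h12 x with hcase | hcase
      · by_cases hx1 : x = c1
        · right; left; exact hx1
        · left; left; exact ⟨hcase, hx1⟩
      · by_cases hx2 : x = c2
        · right; right; exact hx2
        · left; right; exact ⟨hcase, hx2⟩
    calc Fintype.card V = (Finset.univ : Finset V).card := rfl
      _ ≤ (S1 ∪ S2 ∪ {c1, c2}).card := Finset.card_le_card hsub
      _ ≤ (S1 ∪ S2).card + ({c1, c2} : Finset V).card := Finset.card_union_le _ _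
      _ ≤ S1.card + S2.card + ({c1, c2} : Finset V).card := by
          have := Finset.card_union_le S1 S2
          omega
      _ ≤ S1.card + S2.card + 2 := by
          have : ({c1, c2} : Finset V).card ≤ 2 := Finset.card_insert_le c1 {c2} |>.trans (by simp)
          omega
  -- leaves on the two sides are disjoint
  have hleaves : L1.card + L2.card ≤ l := by
    have hdisj : Disjoint L1 L2 := by
      rw [Finset.disjoint_left]
      intro a ha1 ha2
      simp only [hL1, hL2, Finset.mem_filter, Finset.mem_univ, true_and] at ha1 ha2
      omega
    have hsub : L1 ∪ L2 ⊆ Finset.univ.filter (fun v => deg G v = 1) := by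
      intro a ha
      rcases Finset.mem_union.mp ha with h | h <;>
        simp only [hL1, hL2, Finset.mem_filter, Finset.mem_univ, true_and] at h <;>
        simp [h.1]
    have hcount : (Finset.univ.filter (fun v => deg G v = 1)).card = l := by
      rw [← hleaf]
      unfold leafCount
      rw [Set.ncard_eq_toFinset_card']
      congr 1
      ext a
      simp
    calc L1.card + L2.card = (L1 ∪ L2).card := (Finset.card_union_of_disjoint hdisj).symm
      _ ≤ _ := Finset.card_le_card hsub
      _ = l := hcount
  -- conclude
  have hV : Fintype.card V ≤ l * r + 2 := by
    have h1 : (L1.card + L2.card) * r ≤ l * r := Nat.mul_le_mul_right r hleaves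
    have h2 : (L1.card + L2.card) * r = L1.card * r + L2.card * r := add_mul _ _ _
    omega
  haveI : Fintype G.edgeSet := Fintype.ofFinite _
  have hedge : edgeCount G = Fintype.card V - 1 := by
    have hcf := hG.card_edgeFinset
    unfold edgeCount
    rw [Set.ncard_eq_toFinset_card']
    have : G.edgeSet.toFinset = G.edgeFinset := rfl
    rw [this]
    omega
  have hkey : (d - 1) * l / 2 = l * r := by
    rw [show d - 1 = 2 * r by omega]
    rw [show 2 * r * l = 2 * (l * r) by ring]
    exact Nat.mul_div_cancel_left _ (by norm_num)
  rw [hedge, hkey]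
  omega
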